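/- Let h : (0,∞) → ℝ be continuous and piecewise generalized polynomial in one variable; i.e., there exist distinct one-variable generalized polynomial functions g_1, …, g_l such that the sets A_i := {x ∈ (0,∞) : h(x) = g_i(x)} are generalized semialgebraic subsets of (0,∞) and cover (0,∞). Then there exist finitely many one-variable generalized polynomial functions f_{jk} (1 ≤ j ≤ J, 1 ≤ k ≤ K_j) such that h(x) = max_{1≤j≤J} min_{1≤k≤K_j} f_{jk}(x) for all x ∈ (0,∞). -/

import Mathlib

open Set

noncomputable section

/-- The open half-line `(0,∞)`, as a subtype of `ℝ`. -/
abbrev P1 : Type := {x : ℝ // 0 < x}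

/-- A one-variable generalized polynomial function: `x ↦ ∑ cᵢ x^{αᵢ}` with
nonzero real coefficients and distinct real exponents. -/
def IsGenPoly1S (a : P1 → ℝ) : Prop :=
  ∃ (m : ℕ) (c : Fin m → ℝ) (α : Fin m → ℝ),
    (∀ i, c i ≠ 0) ∧ Function.Injective α ∧
    ∀ x : P1, a x = ∑ i, c i * (x : ℝ) ^ α i

/-- A basic generalized semialgebraic subset of `(0,∞)`. -/
def IsBasicGSA1 (S : Set P1) : Prop :=
  ∃ (f : P1 → ℝ) (K : ℕ) (g : Fin K → P1 → ℝ),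
    IsGenPoly1S f ∧ (∀ k, IsGenPoly1S (g k)) ∧
    S = {x : P1 | f x = 0 ∧ ∀ k, 0 < g k x}

/-- A generalized semialgebraic subset of `(0,∞)`: a finite union of basic ones. -/
def IsGSA1 (S : Set P1) : Prop :=
  ∃ (J : ℕ) (T : Fin J → Set P1), (∀ j, IsBasicGSA1 (T j)) ∧ S = ⋃ j, T j



/-- exponential-polynomial predicate -/
def EPF (F : ℝ → ℝ) : Prop :=
  ∃ (m : ℕ) (c α : Fin m → ℝ), ∀ τ, F τ = ∑ i, c i * Real.exp (α i * τ)

lemma hasDerivAt_expsum {ι : Type*} (s : Finset ι) (c e : ι → ℝ) (τ : ℝ) :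
    HasDerivAt (fun τ => ∑ a ∈ s, c a * Real.exp (e a * τ))
      (∑ a ∈ s, c a * e a * Real.exp (e a * τ)) τ := by
  apply HasDerivAt.fun_sum
  intro a _
  have h1 : HasDerivAt (fun τ : ℝ => e a * τ) (e a) τ := by
    simpa using (hasDerivAt_id τ).const_mul (e a)
  have h3 := h1.exp.const_mul (c a)
  convert h3 using 1
  all_goals first | rfl | ring

lemma continuous_expsum {ι : Type*} (s : Finset ι) (c e : ι → ℝ) :
    Continuous (fun τ => ∑ a ∈ s, c a * Real.exp (e a * τ)) := by
  apply continuous_finset_sum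
  intro a _
  exact continuous_const.mul (Real.continuous_exp.comp (continuous_const.mul continuous_id))

lemma finite_zeros_of_deriv (f f' : ℝ → ℝ) (hf : ∀ x, HasDerivAt f (f' x) x)
    (hf' : {x | f' x = 0}.Finite) : {x | f x = 0}.Finite := by
  by_contra hinf
  have hinf' : {x | f x = 0}.Infinite := hinf
  set N := hf'.toFinset.card with hN
  obtain ⟨S, hSsub, hScard⟩ := hinf'.exists_subset_card_eq (N + 2)
  set e := S.orderIsoOfFin hScard with he
  have key : ∀ i : Fin (N + 1), ∃ x, x ∈ Set.Ioo ((e i.castSucc : ℝ)) ((e i.succ : ℝ)) ∧ f' x = 0 := by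
    intro i
    have hab : (e i.castSucc : ℝ) < (e i.succ : ℝ) := by
      have : i.castSucc < i.succ := Fin.castSucc_lt_succ
      exact_mod_cast (e.lt_iff_lt.2 this)
    have hfa : f (e i.castSucc) = 0 := hSsub (e i.castSucc).2
    have hfb : f (e i.succ) = 0 := hSsub (e i.succ).2
    obtain ⟨x, hx, hx'⟩ := exists_hasDerivAt_eq_slope f f' hab
      (fun x _ => (hf x).continuousAt.continuousWithinAt) (fun x _ => hf x)
    refine ⟨x, hx, ?_⟩
    rw [hx', hfa, hfb]; simp
  choose φ hφIoo hφ0 using key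
  have hφmem : ∀ i, φ i ∈ hf'.toFinset := by
    intro i; simp [Set.Finite.mem_toFinset]; exact hφ0 i
  have hφinj : Function.Injective φ := by
    have hmono : StrictMono φ := by
      intro i j hij
      have h1 : φ i < (e i.succ : ℝ) := (hφIoo i).2
      have h2 : (e j.castSucc : ℝ) < φ j := (hφIoo j).1
      have h3 : (e i.succ : ℝ) ≤ (e j.castSucc : ℝ) := by
        have : i.succ ≤ j.castSucc := by
          rw [Fin.succ_le_castSucc_iff]; exact hij
        exact_mod_cast (e.le_iff_le.2 this)
      linarith
    exact hmono.injective
  have : N + 1 ≤ N := by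
    calc N + 1 = (Finset.univ : Finset (Fin (N+1))).card := by simp
    _ ≤ hf'.toFinset.card := Finset.card_le_card_of_injOn φ (fun i _ => hφmem i)
        (hφinj.injOn)
  omega

/-- A nontrivial finite exp-sum has finitely many zeros. -/
lemma finite_zeros_expsum : ∀ (m : ℕ) (s : Finset ℝ) (c : ℝ → ℝ), s.card ≤ m →
    (∃ a ∈ s, c a ≠ 0) → {τ : ℝ | ∑ a ∈ s, c a * Real.exp (a * τ) = 0}.Finite := by
  intro m
  induction m with
  | zero =>
    intro s c hcard ⟨a, ha, _⟩
    rw [Nat.le_zero, Finset.card_eq_zero] at hcard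
    simp [hcard] at ha
  | succ m ih =>
    intro s c hcard ⟨a₀, ha₀, hc₀⟩
    by_cases hrest : ∀ a ∈ s.erase a₀, c a = 0
    · -- the sum is a single nonvanishing term
      have : ∀ τ : ℝ, ∑ a ∈ s, c a * Real.exp (a * τ) = c a₀ * Real.exp (a₀ * τ) := by
        intro τ
        rw [← Finset.add_sum_erase s _ ha₀, Finset.sum_eq_zero, add_zero]
        intro a ha; rw [hrest a ha, zero_mul]
      have : {τ : ℝ | ∑ a ∈ s, c a * Real.exp (a * τ) = 0} = ∅ := by
        ext τ; simp only [Set.mem_setOf_eq, this τ, Set.mem_empty_iff_false, iff_false]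
        exact mul_ne_zero hc₀ (Real.exp_ne_zero _)
      rw [this]; exact Set.finite_empty
    · push_neg at hrest
      obtain ⟨a₁, ha₁, hc₁⟩ := hrest
      set F : ℝ → ℝ := fun τ => ∑ a ∈ s, c a * Real.exp ((a - a₀) * τ) with hF
      set F' : ℝ → ℝ := fun τ => ∑ a ∈ s, c a * (a - a₀) * Real.exp ((a - a₀) * τ) with hF'
      have hder : ∀ τ, HasDerivAt F (F' τ) τ := fun τ => hasDerivAt_expsum s c (fun a => a - a₀) τ
      -- zero set of the original equals zero set of F
      have hzeq : {τ : ℝ | ∑ a ∈ s, c a * Real.exp (a * τ) = 0} = {τ | F τ = 0} := by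
        ext τ
        have : ∑ a ∈ s, c a * Real.exp (a * τ) = Real.exp (a₀ * τ) * F τ := by
          rw [hF, Finset.mul_sum]
          refine Finset.sum_congr rfl fun a _ => ?_
          have hexp : Real.exp (a₀ * τ) * Real.exp ((a - a₀) * τ) = Real.exp (a * τ) := by
            rw [← Real.exp_add]; congr 1; ring
          rw [← hexp]; ring
        simp only [Set.mem_setOf_eq, this]
        constructor
        · intro h; rcases mul_eq_zero.1 h with h | h
          · exact absurd h (Real.exp_ne_zero _)
          · exact h
        · intro h; rw [h, mul_zero]
      -- F' is an exp-sum over the shifted erased finset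
      set s' : Finset ℝ := (s.erase a₀).image (fun a => a - a₀) with hs'
      set c' : ℝ → ℝ := fun b => c (b + a₀) * b with hc'
      have hF'eq : ∀ τ, F' τ = ∑ b ∈ s', c' b * Real.exp (b * τ) := by
        intro τ
        have h1 : ∑ b ∈ s', c' b * Real.exp (b * τ)
            = ∑ a ∈ s.erase a₀, c a * (a - a₀) * Real.exp ((a - a₀) * τ) := by
          rw [hs', Finset.sum_image (by intro x _ y _ h; linarith)]
          refine Finset.sum_congr rfl fun a _ => ?_
          simp only [hc']
          have h2 : a - a₀ + a₀ = a := by ring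
          rw [h2]
        rw [h1]
        show ∑ a ∈ s, c a * (a - a₀) * Real.exp ((a - a₀) * τ) = _
        rw [← Finset.add_sum_erase s (fun a => c a * (a - a₀) * Real.exp ((a - a₀) * τ)) ha₀]
        simp
      have hcard' : s'.card ≤ m := by
        rw [hs']
        calc ((s.erase a₀).image (fun a => a - a₀)).card ≤ (s.erase a₀).card :=
              Finset.card_image_le
        _ = s.card - 1 := Finset.card_erase_of_mem ha₀
        _ ≤ m := by omega
      have hwit : ∃ b ∈ s', c' b ≠ 0 := by
        refine ⟨a₁ - a₀, Finset.mem_image_of_mem _ ha₁, ?_⟩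
        rw [hc']
        have hne : a₁ ≠ a₀ := Finset.ne_of_mem_erase ha₁
        simp only [sub_add_cancel]
        exact mul_ne_zero hc₁ (sub_ne_zero.2 hne)
      have hfin' : {τ | F' τ = 0}.Finite := by
        have := ih s' c' hcard' hwit
        convert this using 1
        ext τ; simp [hF'eq τ]
      rw [hzeq]
      exact finite_zeros_of_deriv F F' hder hfin'

lemma EPF_const (k : ℝ) : EPF (fun _ => k) := by
  refine ⟨1, fun _ => k, fun _ => 0, fun τ => ?_⟩
  simp

lemma EPF.add {F G : ℝ → ℝ} (hF : EPF F) (hG : EPF G) : EPF (fun τ => F τ + G τ) := by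
  obtain ⟨m, c, α, hc⟩ := hF
  obtain ⟨m', c', α', hc'⟩ := hG
  refine ⟨m + m', Fin.append c c', Fin.append α α', fun τ => ?_⟩
  show F τ + G τ = _
  rw [hc, hc', Fin.sum_univ_add]
  simp [Fin.append_left, Fin.append_right]

lemma EPF.neg {F : ℝ → ℝ} (hF : EPF F) : EPF (fun τ => -(F τ)) := by
  obtain ⟨m, c, α, hc⟩ := hF
  refine ⟨m, fun i => -(c i), α, fun τ => ?_⟩
  show -(F τ) = _
  rw [hc]
  simp [Finset.sum_neg_distrib, neg_mul]

lemma EPF.sub {F G : ℝ → ℝ} (hF : EPF F) (hG : EPF G) : EPF (fun τ => F τ - G τ) := by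
  have := hF.add hG.neg
  simpa [sub_eq_add_neg] using this

lemma EPF.mulTerm {F : ℝ → ℝ} (hF : EPF F) (d β : ℝ) :
    EPF (fun τ => F τ * (d * Real.exp (β * τ))) := by
  obtain ⟨m, c, α, hc⟩ := hF
  refine ⟨m, fun i => c i * d, fun i => α i + β, fun τ => ?_⟩
  show F τ * (d * Real.exp (β * τ)) = _
  rw [hc, Finset.sum_mul]
  refine Finset.sum_congr rfl fun i _ => ?_
  rw [add_mul, Real.exp_add]
  ring

lemma EPF.const_mul {F : ℝ → ℝ} (hF : EPF F) (d : ℝ) :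
    EPF (fun τ => d * F τ) := by
  have := hF.mulTerm d 0
  simpa [mul_comm] using this

lemma EPF.continuous {F : ℝ → ℝ} (hF : EPF F) : Continuous F := by
  obtain ⟨m, c, α, hc⟩ := hF
  have : F = fun τ => ∑ i ∈ Finset.univ, c i * Real.exp (α i * τ) := funext hc
  rw [this]
  exact continuous_expsum _ _ _

lemma EPF.reflect {F : ℝ → ℝ} (hF : EPF F) : EPF (fun τ => F (-τ)) := by
  obtain ⟨m, c, α, hc⟩ := hF
  refine ⟨m, c, fun i => -(α i), fun τ => ?_⟩
  show F (-τ) = _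
  rw [hc]
  refine Finset.sum_congr rfl fun i _ => ?_
  ring_nf

/-- Conversion to a Finset-indexed representation with merged exponents. -/
lemma EPF.finset_rep {F : ℝ → ℝ} (hF : EPF F) :
    ∃ (s : Finset ℝ) (cc : ℝ → ℝ), ∀ τ, F τ = ∑ b ∈ s, cc b * Real.exp (b * τ) := by
  classical
  obtain ⟨m, c, α, hc⟩ := hF
  refine ⟨Finset.univ.image α, fun b => ∑ i ∈ Finset.univ.filter (fun i => α i = b), c i,
    fun τ => ?_⟩
  rw [hc]
  rw [← Finset.sum_fiberwise_of_maps_to (fun i _ => Finset.mem_image_of_mem α (Finset.mem_univ i))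
    (fun i => c i * Real.exp (α i * τ))]
  refine Finset.sum_congr rfl fun b _ => ?_
  rw [Finset.sum_mul]
  refine Finset.sum_congr rfl fun i hi => ?_
  rw [(Finset.mem_filter.1 hi).2]

lemma EPF.finite_eq {F G : ℝ → ℝ} (hF : EPF F) (hG : EPF G) (hne : F ≠ G) :
    {τ : ℝ | F τ = G τ}.Finite := by
  classical
  obtain ⟨s, cc, hrep⟩ := (hF.sub hG).finset_rep
  by_cases hz : ∀ b ∈ s, cc b = 0
  · exfalso
    apply hne
    funext τ
    have := hrep τ
    rw [Finset.sum_eq_zero (fun b hb => by rw [hz b hb, zero_mul])] at this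
    linarith [this]
  · push_neg at hz
    have hfin := finite_zeros_expsum s.card s cc le_rfl hz
    have : {τ : ℝ | F τ = G τ} = {τ : ℝ | ∑ b ∈ s, cc b * Real.exp (b * τ) = 0} := by
      ext τ
      simp only [Set.mem_setOf_eq, ← hrep τ]
      constructor
      · intro h; linarith
      · intro h; linarith
    rw [this]; exact hfin

lemma EPF.congr {F G : ℝ → ℝ} (hF : EPF F) (hFG : ∀ τ, F τ = G τ) : EPF G := by
  obtain ⟨m, c, α, hc⟩ := hF
  exact ⟨m, c, α, fun τ => (hFG τ) ▸ hc τ⟩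

lemma two_le_K (b τ : ℝ) : 2 ≤ Real.exp (b * τ) + Real.exp (-b * τ) := by
  have hmul : Real.exp (b * τ) * Real.exp (-b * τ) = 1 := by
    rw [← Real.exp_add]; ring_nf; exact Real.exp_zero
  nlinarith [Real.exp_pos (b * τ), sq_nonneg (Real.exp (b * τ) - 1)]

lemma EPF_K (b : ℝ) : EPF (fun τ => Real.exp (b * τ) + Real.exp (-b * τ)) := by
  refine ⟨2, fun _ => 1, ![b, -b], fun τ => ?_⟩
  rw [Fin.sum_univ_two]
  simp

/-- Global bound for an exp-poly by a symmetric two-term exp-poly. -/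
lemma EPF.bound {F : ℝ → ℝ} (hF : EPF F) :
    ∃ C b : ℝ, 0 ≤ C ∧ 0 ≤ b ∧
      ∀ τ, |F τ| ≤ C * (Real.exp (b * τ) + Real.exp (-b * τ)) := by
  obtain ⟨m, c, α, hc⟩ := hF
  obtain ⟨b0, hb0⟩ := Finset.exists_le (Finset.univ.image (fun i => |α i|))
  set b := max b0 0 with hb
  have hbnn : 0 ≤ b := le_max_right _ _
  have hαb : ∀ i, |α i| ≤ b := fun i =>
    le_trans (hb0 _ (Finset.mem_image_of_mem _ (Finset.mem_univ i))) (le_max_left _ _)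
  refine ⟨∑ i, |c i|, b, Finset.sum_nonneg fun i _ => abs_nonneg _, hbnn, fun τ => ?_⟩
  rw [hc]
  calc |∑ i, c i * Real.exp (α i * τ)| ≤ ∑ i, |c i * Real.exp (α i * τ)| :=
        Finset.abs_sum_le_sum_abs _ _
  _ ≤ ∑ i, |c i| * (Real.exp (b * τ) + Real.exp (-b * τ)) := by
      refine Finset.sum_le_sum fun i _ => ?_
      rw [abs_mul, abs_of_pos (Real.exp_pos _)]
      refine mul_le_mul_of_nonneg_left ?_ (abs_nonneg _)
      have : α i * τ ≤ b * τ ∨ α i * τ ≤ -b * τ := by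
        rcases le_total 0 τ with hτ | hτ
        · left; exact mul_le_mul_of_nonneg_right (le_trans (le_abs_self _) (hαb i)) hτ
        · right
          have h1 : -(α i) ≤ b := le_trans (neg_le_abs _) (hαb i)
          nlinarith
      rcases this with h | h
      · exact le_trans (Real.exp_le_exp.2 h) (le_add_of_nonneg_right (Real.exp_pos _).le)
      · exact le_trans (Real.exp_le_exp.2 h) (le_add_of_nonneg_left (Real.exp_pos _).le)
  _ = (∑ i, |c i|) * (Real.exp (b * τ) + Real.exp (-b * τ)) := by rw [Finset.sum_mul]

/-- Strict separation lemma: given θ < ζ, there is an exp-poly above `p` on `Iic θ`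
and below `q` on `Ici ζ`. -/
lemma sepA {p q : ℝ → ℝ} (hp : EPF p) (hq : EPF q) {θ ζ : ℝ} (hθζ : θ < ζ) :
    ∃ f : ℝ → ℝ, EPF f ∧ (∀ τ, τ ≤ θ → p τ ≤ f τ) ∧ (∀ τ, ζ ≤ τ → f τ ≤ q τ) := by
  obtain ⟨C, b, hC, hb, hbd⟩ := (hq.sub hp).bound
  set K : ℝ → ℝ := fun τ => Real.exp (b * τ) + Real.exp (-b * τ) with hK
  set d0 : ℝ := Real.exp ζ - Real.exp θ with hd0
  have hd0pos : 0 < d0 := by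
    rw [hd0]; have := Real.exp_lt_exp.2 hθζ; linarith
  set f : ℝ → ℝ := fun τ => p τ + (C / d0) * (K τ * (Real.exp θ - Real.exp τ)) with hf
  have hKnn : ∀ τ, 0 ≤ K τ := fun τ => by positivity
  have hEPF : EPF f := by
    have hKE := EPF_K b
    have h1 := hKE.mulTerm (Real.exp θ) 0
    have h2 := hKE.mulTerm 1 1
    have h3 := ((h1.sub h2).const_mul (C / d0))
    refine hp.add h3 |>.congr fun τ => ?_
    show p τ + _ = f τ
    rw [hf]
    simp only [zero_mul, Real.exp_zero, one_mul, mul_one]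
    ring
  refine ⟨f, hEPF, fun τ hτ => ?_, fun τ hτ => ?_⟩
  · show p τ ≤ p τ + (C / d0) * (K τ * (Real.exp θ - Real.exp τ))
    have h1 : Real.exp τ ≤ Real.exp θ := Real.exp_le_exp.2 hτ
    have h2 : 0 ≤ (C / d0) * (K τ * (Real.exp θ - Real.exp τ)) :=
      mul_nonneg (by positivity) (mul_nonneg (hKnn τ) (by linarith))
    linarith
  · show p τ + (C / d0) * (K τ * (Real.exp θ - Real.exp τ)) ≤ q τ
    have h1 : Real.exp θ - Real.exp τ ≤ -d0 := by
      have := Real.exp_le_exp.2 hτ; rw [hd0]; linarith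
    have h2 : (C / d0) * (K τ * (Real.exp θ - Real.exp τ)) ≤ (C / d0) * (K τ * (-d0)) := by
      refine mul_le_mul_of_nonneg_left ?_ (by positivity)
      exact mul_le_mul_of_nonneg_left h1 (hKnn τ)
    have h3 : (C / d0) * (K τ * (-d0)) = -(C * K τ) := by
      field_simp
    have h4 : -(C * K τ) ≤ q τ - p τ := (abs_le.1 (hbd τ)).1
    have h5 : (C / d0) * (K τ * (Real.exp θ - Real.exp τ)) ≤ q τ - p τ :=
      le_trans h2 (le_trans (le_of_eq h3) h4)
    linarith

set_option maxHeartbeats 1600000 in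
/-- Tangential separation lemma: if `p z = q z`, there is an exp-poly above `p` on `Iic z`
and below `q` on `Ici z`. -/
lemma sepB {p q : ℝ → ℝ} (hp : EPF p) (hq : EPF q) {z : ℝ} (hz : p z = q z) :
    ∃ f : ℝ → ℝ, EPF f ∧ (∀ τ, τ ≤ z → p τ ≤ f τ) ∧ (∀ τ, z ≤ τ → f τ ≤ q τ) := by
  set G : ℝ → ℝ := fun τ => q τ - p τ with hGdef
  obtain ⟨mG, cG, αG, hGrep⟩ := (hq.sub hp : EPF G)
  set G' : ℝ → ℝ := fun τ => ∑ i, cG i * αG i * Real.exp (αG i * τ) with hG'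
  have hGder : ∀ τ, HasDerivAt G (G' τ) τ := by
    intro τ
    have := hasDerivAt_expsum Finset.univ cG αG τ
    have heq : G = fun τ => ∑ i ∈ Finset.univ, cG i * Real.exp (αG i * τ) := funext hGrep
    rw [heq]; exact this
  have hG'cont : Continuous G' := continuous_expsum _ _ _
  obtain ⟨L0, hL0⟩ := (isCompact_Icc (a := z) (b := z + 1)).exists_bound_of_continuousOn
    hG'cont.continuousOn
  set L : ℝ := max L0 0 with hL
  have hLnn : 0 ≤ L := le_max_right _ _
  have hLbd : ∀ x ∈ Set.Icc z (z+1), |G' x| ≤ L :=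
    fun x hx => le_trans (hL0 x hx) (le_max_left _ _)
  obtain ⟨C, b, hC, hb, hbd⟩ := (hq.sub hp : EPF G).bound
  set K : ℝ → ℝ := fun τ => Real.exp (b * τ) + Real.exp (-b * τ) with hK
  have hKnn : ∀ τ, 0 ≤ K τ := fun τ => by positivity
  have hK2 : ∀ τ, 2 ≤ K τ := fun τ => two_le_K b τ
  set δ : ℝ := Real.exp (z + 1) - Real.exp z with hδ
  have hδpos : 0 < δ := by
    rw [hδ]; have := Real.exp_lt_exp.2 (show z < z + 1 by linarith); linarith
  set M : ℝ := max (L / (2 * Real.exp z)) (C / δ) with hM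
  have hMnn : 0 ≤ M := le_trans (by positivity) (le_max_left _ _)
  have hM1 : L ≤ 2 * M * Real.exp z := by
    have h1 : L / (2 * Real.exp z) ≤ M := le_max_left _ _
    have h2 : 0 < 2 * Real.exp z := by positivity
    calc L = (L / (2 * Real.exp z)) * (2 * Real.exp z) := by field_simp
    _ ≤ M * (2 * Real.exp z) := mul_le_mul_of_nonneg_right h1 h2.le
    _ = 2 * M * Real.exp z := by ring
  have hM2 : C ≤ M * δ := by
    have h1 : C / δ ≤ M := le_max_right _ _
    calc C = (C / δ) * δ := by field_simp
    _ ≤ M * δ := mul_le_mul_of_nonneg_right h1 hδpos.le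
  set f : ℝ → ℝ := fun τ => p τ + M * (K τ * (Real.exp z - Real.exp τ)) with hf
  have hEPF : EPF f := by
    have hKE := EPF_K b
    have h1 := hKE.mulTerm (Real.exp z) 0
    have h2 := hKE.mulTerm 1 1
    have h3 := ((h1.sub h2).const_mul M)
    refine hp.add h3 |>.congr fun τ => ?_
    show p τ + _ = f τ
    rw [hf]
    simp only [zero_mul, Real.exp_zero, one_mul, mul_one]
    ring
  refine ⟨f, hEPF, fun τ hτ => ?_, fun τ hτ => ?_⟩
  · show p τ ≤ p τ + M * (K τ * (Real.exp z - Real.exp τ))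
    have h1 : Real.exp τ ≤ Real.exp z := Real.exp_le_exp.2 hτ
    have h2 : 0 ≤ M * (K τ * (Real.exp z - Real.exp τ)) :=
      mul_nonneg hMnn (mul_nonneg (hKnn τ) (by linarith))
    linarith
  · -- need : f τ ≤ q τ, i.e. M * (K τ * (exp z - exp τ)) ≤ G τ
    show p τ + M * (K τ * (Real.exp z - Real.exp τ)) ≤ q τ
    have key : M * (K τ * (Real.exp z - Real.exp τ)) ≤ G τ := by
      rcases eq_or_lt_of_le hτ with heq | hlt
      · have hG0 : G τ = 0 := by show q τ - p τ = 0; rw [← heq, ← hz]; ring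
        rw [hG0, ← heq]
        simp
      rcases le_total τ (z + 1) with hcase | hcase
      · -- MVT regime
        obtain ⟨ξ, hξmem, hξ⟩ := exists_hasDerivAt_eq_slope G G' hlt
          (fun x _ => (hGder x).continuousAt.continuousWithinAt) (fun x _ => hGder x)
        have hGz : G z = 0 := by show q z - p z = 0; rw [← hz]; ring
        have hne : τ - z ≠ 0 := sub_ne_zero.2 hlt.ne'
        have hGτ : G τ = G' ξ * (τ - z) := by
          rw [hξ, hGz, sub_zero, div_mul_cancel₀ _ hne]
        have hξL : |G' ξ| ≤ L := hLbd ξ ⟨hξmem.1.le, le_trans hξmem.2.le hcase⟩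
        have h1 : G τ ≥ -(L * (τ - z)) := by
          rw [hGτ]
          have := (abs_le.1 hξL).1
          nlinarith [sub_nonneg.2 hlt.le]
        have h2 : Real.exp z * (τ - z) ≤ Real.exp τ - Real.exp z := by
          have h3 : (τ - z) + 1 ≤ Real.exp (τ - z) := Real.add_one_le_exp _
          have h4 : Real.exp τ = Real.exp z * Real.exp (τ - z) := by
            rw [← Real.exp_add]; ring_nf
          nlinarith [Real.exp_pos z]
        have h5 : L * (τ - z) ≤ M * (K τ * (Real.exp τ - Real.exp z)) := by
          have hτz : (0:ℝ) ≤ τ - z := by linarith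
          have h6 : 2 * M * (Real.exp z * (τ - z)) ≤ M * (K τ * (Real.exp τ - Real.exp z)) := by
            have h7 : 2 * (Real.exp z * (τ - z)) ≤ K τ * (Real.exp τ - Real.exp z) := by
              have h8 : 0 ≤ Real.exp τ - Real.exp z := by nlinarith [Real.exp_pos z]
              nlinarith [hK2 τ]
            nlinarith
          nlinarith [Real.exp_pos z]
        nlinarith
      · -- far regime
        have h1 : -(C * K τ) ≤ G τ := (abs_le.1 (hbd τ)).1
        have h2 : Real.exp (z+1) ≤ Real.exp τ := Real.exp_le_exp.2 hcase
        have h3 : M * (K τ * (Real.exp z - Real.exp τ)) ≤ -(C * K τ) := by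
          have h4 : Real.exp z - Real.exp τ ≤ -δ := by rw [hδ]; linarith
          have h5 : 0 ≤ M * K τ * (Real.exp τ - Real.exp z - δ) :=
            mul_nonneg (mul_nonneg hMnn (hKnn τ)) (by linarith)
          have h6 : 0 ≤ (M * δ - C) * K τ :=
            mul_nonneg (by linarith) (hKnn τ)
          nlinarith [h5, h6]
        linarith
    have key2 : M * (K τ * (Real.exp z - Real.exp τ)) ≤ q τ - p τ := by
      rw [hGdef] at key
      exact key
    linarith

lemma sepA' {p q : ℝ → ℝ} (hp : EPF p) (hq : EPF q) {θ ζ : ℝ} (hζθ : ζ < θ) :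
    ∃ f : ℝ → ℝ, EPF f ∧ (∀ τ, θ ≤ τ → p τ ≤ f τ) ∧ (∀ τ, τ ≤ ζ → f τ ≤ q τ) := by
  obtain ⟨f0, hf0, h1, h2⟩ := sepA hp.reflect hq.reflect (neg_lt_neg hζθ)
  refine ⟨fun τ => f0 (-τ), hf0.reflect, fun τ hτ => ?_, fun τ hτ => ?_⟩
  · have := h1 (-τ) (by linarith)
    simpa using this
  · have := h2 (-τ) (by linarith)
    simpa using this

lemma sepB' {p q : ℝ → ℝ} (hp : EPF p) (hq : EPF q) {z : ℝ} (hz : p z = q z) :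
    ∃ f : ℝ → ℝ, EPF f ∧ (∀ τ, z ≤ τ → p τ ≤ f τ) ∧ (∀ τ, τ ≤ z → f τ ≤ q τ) := by
  have hz' : p (-(-z)) = q (-(-z)) := by simpa using hz
  obtain ⟨f0, hf0, h1, h2⟩ := sepB hp.reflect hq.reflect (z := -z) hz'
  refine ⟨fun τ => f0 (-τ), hf0.reflect, fun τ hτ => ?_, fun τ hτ => ?_⟩
  · have := h1 (-τ) (by linarith)
    simpa using this
  · have := h2 (-τ) (by linarith)
    simpa using this

/-- Abstract sup-inf representation lemma. -/
lemma rep_lemma {ι : Type} [Fintype ι] (FF : ι → ℝ → ℝ) (H : ℝ → ℝ)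
    (hex : ∀ τ, ∃ a, FF a τ = H τ)
    (hsep : ∀ τ σ, ∃ a, H τ ≤ FF a τ ∧ FF a σ ≤ H σ) :
    ∃ (J : ℕ) (K : Fin (J+1) → ℕ) (φ : (j : Fin (J+1)) → Fin (K j + 1) → ι),
      ∀ τ, H τ = ⨆ j, ⨅ k, FF (φ j k) τ := by
  classical
  set val : Finset ι → ℝ → ℝ :=
    fun S τ => if h : S.Nonempty then S.inf' h (fun a => FF a τ) else 0 with hval
  set SS : Finset (Finset ι) :=
    Finset.univ.filter (fun S => S.Nonempty ∧ ∀ σ, val S σ ≤ H σ) with hSS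
  have hmemSS : ∀ S : Finset ι, S ∈ SS ↔ S.Nonempty ∧ ∀ σ, val S σ ≤ H σ := by
    intro S; rw [hSS, Finset.mem_filter]; simp
  set Sof : ℝ → Finset ι := fun τ => Finset.univ.filter (fun a => H τ ≤ FF a τ) with hSof
  have hSof_ne : ∀ τ, (Sof τ).Nonempty := by
    intro τ
    obtain ⟨a, ha⟩ := hex τ
    exact ⟨a, by simp [hSof, ha]⟩
  have hval_eq : ∀ (S : Finset ι) (hS : S.Nonempty) τ, val S τ = S.inf' hS (fun a => FF a τ) := by
    intro S hS τ; simp [hval, hS]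
  have hval_self : ∀ τ, val (Sof τ) τ = H τ := by
    intro τ
    rw [hval_eq _ (hSof_ne τ)]
    apply le_antisymm
    · obtain ⟨a, ha⟩ := hex τ
      exact le_trans (Finset.inf'_le (fun a => FF a τ) (by simp [hSof, ha.ge])) ha.le
    · apply Finset.le_inf'
      intro a ha
      exact (Finset.mem_filter.1 ha).2
  have hval_le : ∀ τ σ, val (Sof τ) σ ≤ H σ := by
    intro τ σ
    obtain ⟨a, ha1, ha2⟩ := hsep τ σ
    rw [hval_eq _ (hSof_ne τ)]
    exact le_trans (Finset.inf'_le (fun a => FF a σ) (by simp [hSof, ha1])) ha2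
  have hSofSS : ∀ τ, Sof τ ∈ SS := by
    intro τ
    exact (hmemSS _).2 ⟨hSof_ne τ, hval_le τ⟩
  have hSSne : SS.Nonempty := ⟨Sof 0, hSofSS 0⟩
  have hmain : ∀ τ, H τ = SS.sup' hSSne (fun S => val S τ) := by
    intro τ
    apply le_antisymm
    · rw [← hval_self τ]
      exact Finset.le_sup' (fun S => val S τ) (hSofSS τ)
    · apply Finset.sup'_le
      intro S hS
      exact ((hmemSS S).1 hS).2 τ
  -- Fin-ization
  have hJ : SS.card = (SS.card - 1) + 1 := (Nat.succ_pred_eq_of_pos (Finset.card_pos.2 hSSne)).symm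
  set J : ℕ := SS.card - 1 with hJdef
  set eS : Fin (J+1) → {S // S ∈ SS} := fun j => SS.equivFin.symm (Fin.cast hJ.symm j) with heS
  have heSsurj : ∀ S (hS : S ∈ SS), ∃ j, (eS j : Finset ι) = S := by
    intro S hS
    refine ⟨Fin.cast hJ (SS.equivFin ⟨S, hS⟩), ?_⟩
    simp [heS]
  have hSjmem : ∀ j : Fin (J+1), (eS j : Finset ι) ∈ SS := fun j => (eS j).2
  have hSjne : ∀ j : Fin (J+1), (eS j : Finset ι).Nonempty :=
    fun j => ((hmemSS _).1 (hSjmem j)).1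
  have hKj : ∀ j : Fin (J+1), (eS j : Finset ι).card = ((eS j : Finset ι).card - 1) + 1 :=
    fun j => (Nat.succ_pred_eq_of_pos (Finset.card_pos.2 (hSjne j))).symm
  set eT : (j : Fin (J+1)) → Fin (((eS j : Finset ι).card - 1) + 1) → {a // a ∈ (eS j : Finset ι)} :=
    fun j k => (eS j : Finset ι).equivFin.symm (Fin.cast (hKj j).symm k) with heT
  have heTsurj : ∀ (j : Fin (J+1)) a (ha : a ∈ (eS j : Finset ι)), ∃ k, (eT j k : ι) = a := by
    intro j a ha
    refine ⟨Fin.cast (hKj j) ((eS j : Finset ι).equivFin ⟨a, ha⟩), ?_⟩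
    simp [heT]
  refine ⟨J, fun j => (eS j : Finset ι).card - 1,
    fun j k => (eT j k : ι), fun τ => ?_⟩
  have claim1 : ∀ j : Fin (J+1),
      (⨅ k, FF ((eT j k : ι)) τ) = val (eS j : Finset ι) τ := by
    intro j
    rw [hval_eq _ (hSjne j)]
    apply le_antisymm
    · obtain ⟨a, haS, haeq⟩ := Finset.exists_mem_eq_inf' (hSjne j) (fun a => FF a τ)
      obtain ⟨k, hk⟩ := heTsurj j a haS
      have : (⨅ k, FF ((eT j k : ι)) τ) ≤ FF ((eT j k : ι)) τ :=
        ciInf_le (Set.Finite.bddBelow (Set.finite_range _)) k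
      rw [hk] at this
      rw [haeq]
      exact this
    · apply le_ciInf
      intro k
      exact Finset.inf'_le (fun a => FF a τ) (eT j k).2
  calc H τ = SS.sup' hSSne (fun S => val S τ) := hmain τ
  _ = ⨆ j, ⨅ k, FF ((eT j k : ι)) τ := by
      apply le_antisymm
      · apply Finset.sup'_le
        intro S hS
        obtain ⟨j, hj⟩ := heSsurj S hS
        have h1 : val S τ = ⨅ k, FF ((eT j k : ι)) τ := by
          rw [claim1 j, hj]
        rw [h1]
        exact le_ciSup (f := fun j => ⨅ k, FF ((eT j k : ι)) τ)
          (Set.Finite.bddAbove (Set.finite_range _)) j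
      · apply ciSup_le
        intro j
        rw [claim1 j]
        exact Finset.le_sup' (fun S => val S τ) (hSjmem j)

lemma card_fin_lt {n : ℕ} (k : Fin n) :
    (Finset.univ.filter (fun m : Fin n => m < k)).card = (k : ℕ) := by
  have h2 : (Finset.univ.filter (fun m : Fin n => m < k)).image Fin.val = Finset.range (k : ℕ) := by
    ext a
    simp only [Finset.mem_image, Finset.mem_filter, Finset.mem_univ, true_and, Finset.mem_range]
    constructor
    · rintro ⟨m, hm, rfl⟩
      exact hm
    · intro ha
      exact ⟨⟨a, lt_trans ha k.2⟩, by simpa [Fin.lt_def] using ha, rfl⟩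
  rw [← Finset.card_range (k : ℕ), ← h2,
    Finset.card_image_of_injective _ Fin.val_injective]

lemma countLT (ZF : Finset ℝ) (k : Fin ZF.card) :
    (ZF.filter (fun a => a < ((ZF.orderIsoOfFin rfl k : {x // x ∈ ZF}) : ℝ))).card = (k : ℕ) := by
  set e := ZF.orderIsoOfFin rfl with he
  have himg : ZF.filter (fun a => a < (e k : ℝ)) =
      (Finset.univ.filter (fun m : Fin ZF.card => m < k)).image (fun m => (e m : ℝ)) := by
    ext a
    simp only [Finset.mem_filter, Finset.mem_image, Finset.mem_univ, true_and]
    constructor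
    · rintro ⟨haZ, hlt⟩
      obtain ⟨m, hm⟩ : ∃ m, (e m : ℝ) = a := ⟨e.symm ⟨a, haZ⟩, by simp⟩
      refine ⟨m, ?_, hm⟩
      have : (e m : {x // x ∈ ZF}) < e k := Subtype.coe_lt_coe.1 (hm ▸ hlt)
      exact e.lt_iff_lt.1 this
    · rintro ⟨m, hmk, rfl⟩
      exact ⟨(e m).2, Subtype.coe_lt_coe.2 (e.lt_iff_lt.2 hmk)⟩
  rw [himg, Finset.card_image_of_injective _
    (fun a b hab => e.injective (Subtype.ext hab)), card_fin_lt k]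

lemma countLE (ZF : Finset ℝ) (k : Fin ZF.card) :
    (ZF.filter (fun a => a ≤ ((ZF.orderIsoOfFin rfl k : {x // x ∈ ZF}) : ℝ))).card = (k : ℕ) + 1 := by
  set e := ZF.orderIsoOfFin rfl with he
  have hsplit : ZF.filter (fun a => a ≤ (e k : ℝ)) =
      insert ((e k : ℝ)) (ZF.filter (fun a => a < (e k : ℝ))) := by
    ext a
    simp only [Finset.mem_filter, Finset.mem_insert]
    constructor
    · rintro ⟨haZ, hle⟩
      rcases eq_or_lt_of_le hle with heq | hlt
      · exact Or.inl heq
      · exact Or.inr ⟨haZ, hlt⟩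
    · rintro (rfl | ⟨haZ, hlt⟩)
      · exact ⟨(e k).2, le_refl _⟩
      · exact ⟨haZ, hlt.le⟩
  rw [hsplit, Finset.card_insert_of_notMem (by simp), countLT]

lemma rightApprox (ZF : Finset ℝ) (τ ε : ℝ) (hε : 0 < ε) :
    ∃ σ, τ < σ ∧ σ < τ + ε ∧ ∀ ζ ∈ ZF, ¬(τ < ζ ∧ ζ ≤ σ) := by
  by_cases hne : (ZF.filter (fun ζ => τ < ζ)).Nonempty
  · set nxt := (ZF.filter (fun ζ => τ < ζ)).min' hne with hnxt
    have hnxtgt : τ < nxt := (Finset.mem_filter.1 ((ZF.filter _).min'_mem hne)).2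
    have hnxtle : ∀ ζ ∈ ZF, τ < ζ → nxt ≤ ζ := fun ζ hζ hτζ =>
      Finset.min'_le _ _ (Finset.mem_filter.2 ⟨hζ, hτζ⟩)
    refine ⟨τ + min (nxt - τ) ε / 2, by simp [lt_min_iff]; constructor <;> linarith, ?_, ?_⟩
    · have : min (nxt - τ) ε ≤ ε := min_le_right _ _
      linarith
    · rintro ζ hζ ⟨h1, h2⟩
      have h3 := hnxtle ζ hζ h1
      have h4 : min (nxt - τ) ε ≤ nxt - τ := min_le_left _ _
      have h5 : 0 < min (nxt - τ) ε := lt_min (by linarith) hε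
      linarith
  · refine ⟨τ + ε / 2, by linarith, by linarith, ?_⟩
    rintro ζ hζ ⟨h1, _⟩
    exact hne ⟨ζ, Finset.mem_filter.2 ⟨hζ, h1⟩⟩

lemma leftApprox (ZF : Finset ℝ) (k : Fin ZF.card) (ε : ℝ) (hε : 0 < ε) :
    ∃ σ, σ < ((ZF.orderIsoOfFin rfl k : {x // x ∈ ZF}) : ℝ) ∧
      ((ZF.orderIsoOfFin rfl k : {x // x ∈ ZF}) : ℝ) - σ < ε ∧
      ∀ ζ ∈ ZF, (ζ ≤ σ ↔ ζ < ((ZF.orderIsoOfFin rfl k : {x // x ∈ ZF}) : ℝ)) := by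
  set e := ZF.orderIsoOfFin rfl with he
  set w : ℝ := (e k : ℝ) with hw
  by_cases hne : (ZF.filter (fun ζ => ζ < w)).Nonempty
  · set prv := (ZF.filter (fun ζ => ζ < w)).max' hne with hprv
    have hprvlt : prv < w := (Finset.mem_filter.1 ((ZF.filter _).max'_mem hne)).2
    have hprvge : ∀ ζ ∈ ZF, ζ < w → ζ ≤ prv := fun ζ hζ hζw =>
      Finset.le_max' (ZF.filter (fun ζ => ζ < w)) ζ (Finset.mem_filter.2 ⟨hζ, hζw⟩)
    refine ⟨w - min (w - prv) ε / 2, ?_, ?_, ?_⟩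
    · have : 0 < min (w - prv) ε := lt_min (by linarith) hε
      linarith
    · have : min (w - prv) ε ≤ ε := min_le_right _ _
      linarith
    · intro ζ hζ
      constructor
      · intro hle
        have h5 : 0 < min (w - prv) ε := lt_min (by linarith) hε
        linarith
      · intro hlt
        have := hprvge ζ hζ hlt
        have h4 : min (w - prv) ε ≤ w - prv := min_le_left _ _
        linarith
  · refine ⟨w - ε / 2, by linarith, by linarith, ?_⟩
    intro ζ hζ
    constructor
    · intro hle; linarith
    · intro hlt
      exact absurd ⟨ζ, Finset.mem_filter.2 ⟨hζ, hlt⟩⟩ hne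

set_option maxHeartbeats 2000000 in
lemma main_real (H : ℝ → ℝ) (hH : Continuous H) (l : ℕ) (G : Fin l → ℝ → ℝ)
    (hG : ∀ i, EPF (G i)) (hGne : ∀ i j : Fin l, i ≠ j → G i ≠ G j)
    (hcov : ∀ τ, ∃ i, H τ = G i τ) :
    ∃ (J : ℕ) (K : Fin (J+1) → ℕ) (F : (j : Fin (J+1)) → Fin (K j + 1) → (ℝ → ℝ)),
      (∀ j k, EPF (F j k)) ∧ ∀ τ : ℝ, H τ = ⨆ j, ⨅ k, F j k τ := by
  classical
  have hl : 0 < l := by obtain ⟨i, _⟩ := hcov 0; exact i.pos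
  set Z : Set ℝ := ⋃ (i : Fin l) (j : Fin l), {τ | i ≠ j ∧ G i τ = G j τ} with hZ
  have hZfin : Z.Finite := by
    refine Set.finite_iUnion fun i => Set.finite_iUnion fun j => ?_
    by_cases hij : i = j
    · subst hij
      convert Set.finite_empty
      ext τ; simp
    · exact Set.Finite.subset ((hG i).finite_eq (hG j) (hGne i j hij)) (fun τ hτ => hτ.2)
  set ZF : Finset ℝ := hZfin.toFinset with hZF
  have hZFmem : ∀ τ, τ ∈ ZF ↔ ∃ i j : Fin l, i ≠ j ∧ G i τ = G j τ := by
    intro τ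
    rw [hZF, Set.Finite.mem_toFinset]
    simp [hZ]
  set z : Fin ZF.card → ℝ := fun k => ((ZF.orderIsoOfFin rfl k : {x // x ∈ ZF}) : ℝ) with hz
  have hzlt : ∀ k m : Fin ZF.card, k < m → z k < z m := by
    intro k m hkm
    exact Subtype.coe_lt_coe.2 ((ZF.orderIsoOfFin rfl).lt_iff_lt.2 hkm)
  set cut : ℝ → ℕ := fun τ => (ZF.filter (fun a => a ≤ τ)).card with hcut
  have hcutmono : ∀ {τ σ : ℝ}, τ ≤ σ → cut τ ≤ cut σ := by
    intro τ σ hτσ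
    apply Finset.card_le_card
    intro a ha
    rw [Finset.mem_filter] at *
    exact ⟨ha.1, le_trans ha.2 hτσ⟩
  have hcutle : ∀ τ, cut τ ≤ ZF.card := fun τ => Finset.card_le_card (Finset.filter_subset _ _)
  have hcutz : ∀ k : Fin ZF.card, cut (z k) = (k : ℕ) + 1 := fun k => countLE ZF k
  have hcutzlt : ∀ k : Fin ZF.card, (ZF.filter (fun a => a < z k)).card = (k : ℕ) :=
    fun k => countLT ZF k
  have hcuteq : ∀ τ σ : ℝ, τ ≤ σ → (∀ ζ ∈ ZF, ¬(τ < ζ ∧ ζ ≤ σ)) → cut σ = cut τ := by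
    intro τ σ hle hno
    have hfe : ZF.filter (fun a => a ≤ σ) = ZF.filter (fun a => a ≤ τ) := by
      ext a
      simp only [Finset.mem_filter, and_congr_right_iff]
      intro haZ
      constructor
      · intro hh; by_contra hc; push_neg at hc; exact hno a haZ ⟨hc, hh⟩
      · intro hh; exact le_trans hh hle
    show (ZF.filter (fun a => a ≤ σ)).card = (ZF.filter (fun a => a ≤ τ)).card
    rw [hfe]
  have hIio : ∀ (k : Fin ZF.card) (τ : ℝ), cut τ ≤ (k : ℕ) → τ < z k := by
    intro k τ hcτ
    by_contra hc
    push_neg at hc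
    have := hcutmono hc
    rw [hcutz k] at this
    omega
  have hIci : ∀ (k : Fin ZF.card) (τ : ℝ), (k : ℕ) + 1 ≤ cut τ → z k ≤ τ := by
    intro k τ hcτ
    by_contra hc
    push_neg at hc
    have hsub : ZF.filter (fun a => a ≤ τ) ⊆ ZF.filter (fun a => a < z k) := by
      intro a ha
      rw [Finset.mem_filter] at *
      exact ⟨ha.1, lt_of_le_of_lt ha.2 hc⟩
    have := Finset.card_le_card hsub
    rw [hcutzlt k] at this
    have : cut τ ≤ (k : ℕ) := this
    omega
  have hA : ∀ i, IsClosed {τ | H τ = G i τ} := fun i => isClosed_eq hH (hG i).continuous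
  -- one piece per cell
  have hpiece : ∀ jj : ℕ, ∃ i : Fin l, ∀ τ, cut τ = jj → H τ = G i τ := by
    intro jj
    by_cases hocc : ∃ τ₀, cut τ₀ = jj
    case neg => exact ⟨⟨0, hl⟩, fun τ hτ => absurd ⟨τ, hτ⟩ hocc⟩
    obtain ⟨τ₀, hτ₀⟩ := hocc
    set V : Set ℝ := {τ | cut τ = jj ∧ τ ∉ ZF} with hV
    obtain ⟨σ, hσ1, hσ2, hσ3⟩ := rightApprox ZF τ₀ 1 one_pos
    have hσcut : cut σ = jj := by rw [hcuteq τ₀ σ hσ1.le hσ3, hτ₀]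
    have hσZF : σ ∉ ZF := fun hc => hσ3 σ hc ⟨hσ1, le_refl σ⟩
    have hτ₁ : σ ∈ V := ⟨hσcut, hσZF⟩
    obtain ⟨i, hi⟩ := hcov σ
    set W : Set ℝ := ⋃ i' ∈ {i' : Fin l | i' ≠ i}, {τ | H τ = G i' τ} with hW
    have hWclosed : IsClosed W :=
      Set.Finite.isClosed_biUnion (Set.toFinite _) (fun i' _ => hA i')
    have hWmem : ∀ τ, τ ∈ W ↔ ∃ i', i' ≠ i ∧ H τ = G i' τ := by
      intro τ; rw [hW]; simp [Set.mem_iUnion]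
    have hdisj : Disjoint Wᶜ {τ | H τ = G i τ}ᶜ := by
      rw [Set.disjoint_left]
      intro τ hτu hτv
      obtain ⟨i', hi'⟩ := hcov τ
      by_cases hii : i' = i
      · subst hii; exact hτv hi'
      · exact hτu ((hWmem τ).2 ⟨i', hii, hi'⟩)
    have hVuv : V ⊆ Wᶜ ∪ {τ | H τ = G i τ}ᶜ := by
      intro τ hτ
      by_cases h1 : τ ∈ W
      · right
        intro h2
        obtain ⟨i', hi'ne, hi'eq⟩ := (hWmem τ).1 h1
        exact hτ.2 ((hZFmem τ).2 ⟨i', i, hi'ne, by rw [← hi'eq, ← h2]⟩)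
      · left; exact h1
    have hVne : (V ∩ Wᶜ).Nonempty := by
      refine ⟨σ, hτ₁, fun hc => ?_⟩
      obtain ⟨i', hi'ne, hi'eq⟩ := (hWmem σ).1 hc
      exact hσZF ((hZFmem σ).2 ⟨i', i, hi'ne, by rw [← hi'eq, ← hi]⟩)
    have hVordconn : V.OrdConnected := by
      constructor
      intro x hx y hy t ht
      have hcutt : cut t = jj := by
        have h1 := hcutmono ht.1
        have h2 := hcutmono ht.2
        have h3 := hx.1
        have h4 := hy.1
        omega
      refine ⟨hcutt, fun htZ => ?_⟩
      have hsub : ZF.filter (fun a => a ≤ x) ⊆ ZF.filter (fun a => a ≤ t) := by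
        intro a ha
        rw [Finset.mem_filter] at *
        exact ⟨ha.1, le_trans ha.2 ht.1⟩
      have hcard : (ZF.filter (fun a => a ≤ t)).card ≤ (ZF.filter (fun a => a ≤ x)).card := by
        have h3 : cut t = cut x := by rw [hcutt, hx.1]
        exact le_of_eq h3
      have heqf := Finset.eq_of_subset_of_card_le hsub hcard
      have htmem : t ∈ ZF.filter (fun a => a ≤ x) := by
        rw [heqf, Finset.mem_filter]
        exact ⟨htZ, le_refl t⟩
      have htx : t ≤ x := (Finset.mem_filter.1 htmem).2
      have : t = x := le_antisymm htx ht.1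
      exact hx.2 (this ▸ htZ)
    have hVu : V ⊆ Wᶜ :=
      hVordconn.isPreconnected.subset_left_of_subset_union
        (isOpen_compl_iff.2 hWclosed) (isOpen_compl_iff.2 (hA i)) hdisj hVuv hVne
    have hVsub : V ⊆ {τ | H τ = G i τ} := by
      intro τ hτ
      obtain ⟨i', hi'⟩ := hcov τ
      by_cases hii : i' = i
      · subst hii; exact hi'
      · exact absurd ((hWmem τ).2 ⟨i', hii, hi'⟩) (hVu hτ)
    refine ⟨i, fun τ hτ => ?_⟩
    have hclos : τ ∈ closure V := by
      rw [Metric.mem_closure_iff]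
      intro ε hε
      obtain ⟨σ', h1, h2, h3⟩ := rightApprox ZF τ ε hε
      refine ⟨σ', ⟨?_, fun hc => h3 σ' hc ⟨h1, le_refl _⟩⟩, ?_⟩
      · rw [hcuteq τ σ' h1.le h3, hτ]
      · rw [Real.dist_eq, abs_of_nonpos (by linarith)]
        linarith
    exact (hA i).closure_subset_iff.2 hVsub hclos
  choose pieceIdx hpieceSpec using hpiece
  -- values at the crossing points
  have hzCell : ∀ k : Fin ZF.card, H (z k) = G (pieceIdx (k : ℕ)) (z k) := by
    intro k
    have hclos : z k ∈ closure {τ | cut τ = (k : ℕ)} := by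
      rw [Metric.mem_closure_iff]
      intro ε hε
      obtain ⟨σ, h1, h2, h3⟩ := leftApprox ZF k ε hε
      refine ⟨σ, ?_, ?_⟩
      · show cut σ = (k : ℕ)
        have hfe : ZF.filter (fun a => a ≤ σ) = ZF.filter (fun a => a < z k) := by
          ext a
          simp only [Finset.mem_filter, and_congr_right_iff]
          intro haZ
          exact h3 a haZ
        show (ZF.filter (fun a => a ≤ σ)).card = (k : ℕ)
        rw [hfe]
        exact hcutzlt k
      · rw [Real.dist_eq, abs_of_nonneg (by linarith)]
        linarith
    exact (hA _).closure_subset_iff.2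
      (fun τ hτ => hpieceSpec (k : ℕ) τ hτ) hclos
  have hzCellSucc : ∀ k : Fin ZF.card, H (z k) = G (pieceIdx ((k : ℕ) + 1)) (z k) :=
    fun k => hpieceSpec _ _ (hcutz k)
  -- separators, case j < j'
  have hsepLT : ∀ j j' : Fin (ZF.card + 1), (j : ℕ) < (j' : ℕ) →
      ∃ f, EPF f ∧ (∀ τ, cut τ = (j : ℕ) → H τ ≤ f τ) ∧
        (∀ τ, cut τ = (j' : ℕ) → f τ ≤ H τ) := by
    intro j j' hjj'
    have hj'n : (j' : ℕ) ≤ ZF.card := Nat.lt_succ_iff.1 j'.2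
    have hjn : (j : ℕ) < ZF.card := lt_of_lt_of_le hjj' hj'n
    set kj : Fin ZF.card := ⟨(j : ℕ), hjn⟩ with hkj
    set kj' : Fin ZF.card := ⟨(j' : ℕ) - 1, by omega⟩ with hkj'
    rcases eq_or_lt_of_le (Nat.succ_le_of_lt hjj') with hadj | hnadj
    · -- adjacent : j' = j + 1
      have hkk : kj' = kj := by
        apply Fin.ext
        simp [hkj, hkj']
        omega
      have hpq : G (pieceIdx (j : ℕ)) (z kj) = G (pieceIdx (j' : ℕ)) (z kj) := by
        rw [← hzCell kj]
        have := hzCellSucc kj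
        rw [show (kj : ℕ) + 1 = (j' : ℕ) by simp [hkj]; omega] at this
        exact this
      obtain ⟨f, hfE, hf1, hf2⟩ := sepB (hG (pieceIdx (j : ℕ))) (hG (pieceIdx (j' : ℕ))) hpq
      refine ⟨f, hfE, fun τ hτ => ?_, fun τ hτ => ?_⟩
      · have hτlt : τ < z kj := hIio kj τ (le_of_eq hτ)
        rw [hpieceSpec (j : ℕ) τ hτ]
        exact hf1 τ hτlt.le
      · have hτge : z kj ≤ τ := by
          apply hIci kj
          rw [hτ]
          simp [hkj]
          omega
        rw [hpieceSpec (j' : ℕ) τ hτ]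
        exact hf2 τ hτge
    · -- non-adjacent : j + 1 < j'
      have hθζ : z kj < z kj' := by
        apply hzlt
        rw [Fin.lt_def]
        simp [hkj, hkj']
        omega
      obtain ⟨f, hfE, hf1, hf2⟩ :=
        sepA (hG (pieceIdx (j : ℕ))) (hG (pieceIdx (j' : ℕ))) hθζ
      refine ⟨f, hfE, fun τ hτ => ?_, fun τ hτ => ?_⟩
      · have hτlt : τ < z kj := hIio kj τ (le_of_eq hτ)
        rw [hpieceSpec (j : ℕ) τ hτ]
        exact hf1 τ hτlt.le
      · have hτge : z kj' ≤ τ := by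
          apply hIci kj'
          rw [hτ]
          simp only [hkj', Fin.val_mk]
          omega
        rw [hpieceSpec (j' : ℕ) τ hτ]
        exact hf2 τ hτge
  -- separators, case j' < j
  have hsepGT : ∀ j j' : Fin (ZF.card + 1), (j' : ℕ) < (j : ℕ) →
      ∃ f, EPF f ∧ (∀ τ, cut τ = (j : ℕ) → H τ ≤ f τ) ∧
        (∀ τ, cut τ = (j' : ℕ) → f τ ≤ H τ) := by
    intro j j' hjj'
    have hjn : (j : ℕ) ≤ ZF.card := Nat.lt_succ_iff.1 j.2
    have hj'n : (j' : ℕ) < ZF.card := lt_of_lt_of_le hjj' hjn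
    set kj : Fin ZF.card := ⟨(j : ℕ) - 1, by omega⟩ with hkj
    set kj' : Fin ZF.card := ⟨(j' : ℕ), hj'n⟩ with hkj'
    rcases eq_or_lt_of_le (Nat.succ_le_of_lt hjj') with hadj | hnadj
    · -- adjacent : j = j' + 1
      have hpq : G (pieceIdx (j : ℕ)) (z kj') = G (pieceIdx (j' : ℕ)) (z kj') := by
        have h1 := hzCellSucc kj'
        rw [show (kj' : ℕ) + 1 = (j : ℕ) by simp [hkj']; omega] at h1
        rw [← h1, ← hzCell kj']
      obtain ⟨f, hfE, hf1, hf2⟩ := sepB' (hG (pieceIdx (j : ℕ))) (hG (pieceIdx (j' : ℕ))) hpq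
      refine ⟨f, hfE, fun τ hτ => ?_, fun τ hτ => ?_⟩
      · have hτge : z kj' ≤ τ := by
          apply hIci kj'
          rw [hτ]
          simp [hkj']
          omega
        rw [hpieceSpec (j : ℕ) τ hτ]
        exact hf1 τ hτge
      · have hτlt : τ < z kj' := hIio kj' τ (le_of_eq hτ)
        rw [hpieceSpec (j' : ℕ) τ hτ]
        exact hf2 τ hτlt.le
    · -- non-adjacent : j' + 1 < j
      have hζθ : z kj' < z kj := by
        apply hzlt
        rw [Fin.lt_def]
        simp [hkj, hkj']
        omega
      obtain ⟨f, hfE, hf1, hf2⟩ :=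
        sepA' (hG (pieceIdx (j : ℕ))) (hG (pieceIdx (j' : ℕ))) hζθ
      refine ⟨f, hfE, fun τ hτ => ?_, fun τ hτ => ?_⟩
      · have hτge : z kj ≤ τ := by
          apply hIci kj
          rw [hτ]
          simp only [hkj, Fin.val_mk]
          omega
        rw [hpieceSpec (j : ℕ) τ hτ]
        exact hf1 τ hτge
      · have hτlt : τ < z kj' := hIio kj' τ (le_of_eq hτ)
        rw [hpieceSpec (j' : ℕ) τ hτ]
        exact hf2 τ hτlt.le
  have hsepPair : ∀ j j' : Fin (ZF.card + 1),
      ∃ f, EPF f ∧ (∀ τ, cut τ = (j : ℕ) → H τ ≤ f τ) ∧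
        (∀ τ, cut τ = (j' : ℕ) → f τ ≤ H τ) := by
    intro j j'
    rcases lt_trichotomy ((j : ℕ)) ((j' : ℕ)) with hlt | heq | hgt
    · exact hsepLT j j' hlt
    · refine ⟨G (pieceIdx (j : ℕ)), hG _, fun τ hτ => le_of_eq (hpieceSpec _ τ hτ), fun τ hτ => ?_⟩
      rw [← heq] at hτ
      exact le_of_eq (hpieceSpec _ τ hτ).symm
    · exact hsepGT j j' hgt
  choose sep hsepE hsep1 hsep2 using hsepPair
  -- assemble the family
  set FF : (Fin l ⊕ (Fin (ZF.card + 1) × Fin (ZF.card + 1))) → ℝ → ℝ :=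
    Sum.elim G (fun pr => sep pr.1 pr.2) with hFF
  have hFFE : ∀ a, EPF (FF a) := by
    rintro (i | ⟨j, j'⟩)
    · exact hG i
    · exact hsepE j j'
  have hex : ∀ τ, ∃ a, FF a τ = H τ := by
    intro τ
    obtain ⟨i, hi⟩ := hcov τ
    exact ⟨Sum.inl i, hi.symm⟩
  have hsep' : ∀ τ σ, ∃ a, H τ ≤ FF a τ ∧ FF a σ ≤ H σ := by
    intro τ σ
    refine ⟨Sum.inr (⟨cut τ, Nat.lt_succ_of_le (hcutle τ)⟩, ⟨cut σ, Nat.lt_succ_of_le (hcutle σ)⟩),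
      ?_, ?_⟩
    · exact hsep1 _ _ τ rfl
    · exact hsep2 _ _ σ rfl
  obtain ⟨J, K, φ, hrep⟩ := rep_lemma FF H hex hsep'
  exact ⟨J, K, fun j k => FF (φ j k), fun j k => hFFE _, hrep⟩

lemma EPF_lift {a : P1 → ℝ} (ha : IsGenPoly1S a) :
    EPF (fun τ => a ⟨Real.exp τ, Real.exp_pos τ⟩) := by
  obtain ⟨m, c, α, _, _, hrep⟩ := ha
  refine ⟨m, c, α, fun τ => ?_⟩
  show a ⟨Real.exp τ, Real.exp_pos τ⟩ = _
  rw [hrep]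
  refine Finset.sum_congr rfl fun i _ => ?_
  congr 1
  show (Real.exp τ) ^ (α i) = Real.exp (α i * τ)
  rw [Real.rpow_def_of_pos (Real.exp_pos τ), Real.log_exp, mul_comm]

lemma genPoly_of_EPF {F : ℝ → ℝ} (hF : EPF F) :
    IsGenPoly1S (fun x : P1 => F (Real.log (x : ℝ))) := by
  classical
  obtain ⟨s, cc, hrep⟩ := hF.finset_rep
  set s' : Finset ℝ := s.filter (fun a => cc a ≠ 0) with hs'
  have hrep' : ∀ τ, F τ = ∑ a ∈ s', cc a * Real.exp (a * τ) := by
    intro τ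
    rw [hrep τ]
    symm
    apply Finset.sum_subset (Finset.filter_subset _ _)
    intro a ha hna
    have hcc : cc a = 0 := by
      by_contra hcc
      exact hna (Finset.mem_filter.2 ⟨ha, hcc⟩)
    rw [hcc, zero_mul]
  set e := s'.orderIsoOfFin rfl with he
  have hsum : ∀ (f : ℝ → ℝ), ∑ a ∈ s', f a = ∑ k : Fin s'.card, f ((e k : {x // x ∈ s'}) : ℝ) := by
    intro f
    rw [← Finset.sum_coe_sort s' f]
    exact (Equiv.sum_comp e.toEquiv (fun a => f (a : ℝ))).symm
  refine ⟨s'.card, fun k => cc ((e k : {x // x ∈ s'}) : ℝ),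
    fun k => ((e k : {x // x ∈ s'}) : ℝ), ?_, ?_, ?_⟩
  · intro k
    have hm := (e k).2
    have hm2 : ((e k : {x // x ∈ s'}) : ℝ) ∈ s.filter (fun a => cc a ≠ 0) := hs' ▸ hm
    exact (Finset.mem_filter.1 hm2).2
  · intro k k' hkk'
    exact e.injective (Subtype.ext hkk')
  · intro x
    show F (Real.log (x : ℝ)) = _
    rw [hrep' (Real.log (x : ℝ)), hsum (fun a => cc a * Real.exp (a * Real.log (x : ℝ)))]
    refine Finset.sum_congr rfl fun k _ => ?_
    congr 1
    rw [Real.rpow_def_of_pos x.2, mul_comm]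

/-- The one-variable Pierce–Birkhoff theorem for generalized polynomials: a
continuous piecewise generalized polynomial function of one variable is a sup of
infs of finitely many one-variable generalized polynomial functions. -/
theorem pierce_birkhoff_generalized_one_var (h : P1 → ℝ) (hc : Continuous h)
    (l : ℕ) (g : Fin l → P1 → ℝ)
    (hg : ∀ i, IsGenPoly1S (g i)) (hginj : Function.Injective g)
    (hGSA : ∀ i, IsGSA1 {x : P1 | h x = g i x})
    (hcover : ∀ x : P1, ∃ i, h x = g i x) :
    ∃ (J : ℕ) (K : Fin (J + 1) → ℕ)
      (f : (j : Fin (J + 1)) → Fin (K j + 1) → P1 → ℝ),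
      (∀ j k, IsGenPoly1S (f j k)) ∧
      ∀ x : P1, h x = ⨆ j, ⨅ k, f j k x := by
  classical
  set H : ℝ → ℝ := fun τ => h ⟨Real.exp τ, Real.exp_pos τ⟩ with hHdef
  have hHc : Continuous H := hc.comp (Continuous.subtype_mk Real.continuous_exp _)
  set Gf : Fin l → ℝ → ℝ := fun i τ => g i ⟨Real.exp τ, Real.exp_pos τ⟩ with hGf
  have hGfE : ∀ i, EPF (Gf i) := fun i => EPF_lift (hg i)
  have hback : ∀ (a : P1 → ℝ) (x : P1), a ⟨Real.exp (Real.log (x : ℝ)), Real.exp_pos _⟩ = a x := by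
    intro a x
    congr 1
    exact Subtype.ext (Real.exp_log x.2)
  have hGfne : ∀ i j : Fin l, i ≠ j → Gf i ≠ Gf j := by
    intro i j hij hEq
    apply hij
    apply hginj
    funext x
    have h1 : Gf i (Real.log (x : ℝ)) = Gf j (Real.log (x : ℝ)) := by rw [hEq]
    rw [hGf] at h1
    simp only at h1
    rw [hback (g i) x, hback (g j) x] at h1
    exact h1
  have hcovR : ∀ τ, ∃ i, H τ = Gf i τ := fun τ => hcover _
  obtain ⟨J, K, F, hFE, hFrep⟩ := main_real H hHc l Gf hGfE hGfne hcovR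
  refine ⟨J, K, fun j k => fun x => F j k (Real.log (x : ℝ)),
    fun j k => genPoly_of_EPF (hFE j k), fun x => ?_⟩
  calc h x = H (Real.log (x : ℝ)) := by rw [hHdef]; exact (hback h x).symm
  _ = ⨆ j, ⨅ k, F j k (Real.log (x : ℝ)) := hFrep _
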